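/- Let μ_b, μ_s ≥ 0, κ_b, β_b > 0, let c : [0,∞) → ℝ be continuous and nonnegative, and let M_b ≥ κ_b/β_b. Suppose φ, y : [0,∞) → ℝ are differentiable and satisfy, for all t ≥ 0, φ'(t) = −μ_b φ(t) y(t) − μ_s φ(t) c(t) and y'(t) = κ_b·(φ(t)/(1+φ(t)))·(1−φ(t)) − (μ_b φ(t) + β_b)·y(t), with initial data 0 < φ(0) ≤ 1 and 0 ≤ y(0) ≤ M_b·(1−φ(0)). Then for all t ≥ 0 one has 0 < φ(t) ≤ 1 and 0 ≤ y(t) ≤ M_b·(1−φ(t)). -/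

import Mathlib

open Set Real MeasureTheory intervalIntegral

/-- If a nonnegative continuous function satisfies `u t ≤ C ∫₀ᵗ u`, it vanishes. -/
lemma aux_zero_of_le_integral (T C : ℝ) (hT : 0 ≤ T) (hC : 0 ≤ C)
    (u : ℝ → ℝ) (hu : ContinuousOn u (Icc 0 T))
    (hnn : ∀ t ∈ Icc 0 T, 0 ≤ u t)
    (hle : ∀ t ∈ Icc 0 T, u t ≤ C * ∫ s in (0:ℝ)..t, u s) :
    ∀ t ∈ Icc 0 T, u t = 0 := by
  set p : ℝ → ℝ := fun s => min (max s 0) T with hp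
  have hmem : ∀ s, p s ∈ Icc (0:ℝ) T := fun s => ⟨le_min (le_max_right _ _) hT, min_le_right _ _⟩
  have hpc : Continuous p := (continuous_id.max continuous_const).min continuous_const
  set g : ℝ → ℝ := fun s => u (p s) with hg
  have hgc : Continuous g := hu.comp_continuous hpc hmem
  have hgeq : ∀ s ∈ Icc (0:ℝ) T, g s = u s := by
    intro s hs
    simp only [hg, hp, max_eq_left hs.1, min_eq_left hs.2]
  have hgnn : ∀ s, 0 ≤ g s := fun s => hnn _ (hmem s)
  set v : ℝ → ℝ := fun t => ∫ s in (0:ℝ)..t, g s with hv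
  have hvd : ∀ t, HasDerivAt v (g t) t := fun t =>
    (hgc.integral_hasStrictDerivAt 0 t).hasDerivAt
  have hvnn : ∀ t, 0 ≤ t → 0 ≤ v t := fun t ht =>
    intervalIntegral.integral_nonneg ht (fun s _ => hgnn s)
  have hveq : ∀ t ∈ Icc (0:ℝ) T, v t = ∫ s in (0:ℝ)..t, u s := by
    intro t ht
    apply intervalIntegral.integral_congr
    intro s hs
    rw [uIcc_of_le ht.1] at hs
    exact hgeq s ⟨hs.1, hs.2.trans ht.2⟩
  have key : ∀ t ∈ Icc (0:ℝ) T, ‖v t‖ ≤ gronwallBound 0 C 0 (t - 0) := by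
    apply norm_le_gronwallBound_of_norm_deriv_right_le (f' := g)
    · exact fun t _ => (hvd t).continuousAt.continuousWithinAt
    · exact fun t _ => (hvd t).hasDerivWithinAt
    · simp [hv]
    · intro t ht
      have htm : t ∈ Icc (0:ℝ) T := ⟨ht.1, ht.2.le⟩
      have h1 : g t ≤ C * v t := by
        rw [hgeq t htm, hveq t htm]
        exact hle t htm
      rw [Real.norm_of_nonneg (hgnn t), Real.norm_of_nonneg (hvnn t ht.1)]
      linarith
  intro t ht
  have h2 := key t ht
  rw [gronwallBound_ε0_δ0] at h2
  have hv0 : v t = 0 := norm_le_zero_iff.mp h2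
  have h3 := hle t ht
  rw [← hveq t ht, hv0, mul_zero] at h3
  exact le_antisymm h3 (hnn t ht)

/-- Positivity propagation for `φ' = g φ`. -/
lemma aux_pos (T : ℝ) (φ g : ℝ → ℝ)
    (hφc : ContinuousOn φ (Icc 0 T)) (hgc : ContinuousOn g (Icc 0 T))
    (hd : ∀ t ∈ Ioc (0:ℝ) T, HasDerivAt φ (g t * φ t) t)
    (h0 : 0 < φ 0) : ∀ t ∈ Icc (0:ℝ) T, 0 < φ t := by
  by_contra hcon
  push_neg at hcon
  obtain ⟨t₁, ht₁, ht₁'⟩ := hcon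
  have hsub : Icc (0:ℝ) t₁ ⊆ Icc 0 T := Icc_subset_Icc le_rfl ht₁.2
  obtain ⟨t₂, ht₂, hφt₂⟩ := intermediate_value_Icc' ht₁.1 (hφc.mono hsub) ⟨ht₁', h0.le⟩
  have ht₂pos : 0 < t₂ := by
    rcases eq_or_lt_of_le ht₂.1 with h | h
    · exfalso
      rw [← h] at hφt₂
      rw [hφt₂] at h0
      exact lt_irrefl 0 h0
    · exact h
  obtain ⟨K, hK⟩ := isCompact_Icc.exists_bound_of_continuousOn hgc
  have hsub2 : Icc (0:ℝ) t₂ ⊆ Icc 0 T := Icc_subset_Icc le_rfl (ht₂.2.trans ht₁.2)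
  have key : ∀ s ∈ Icc (0:ℝ) t₂, ‖φ (t₂ - s)‖ ≤ gronwallBound 0 K 0 (s - 0) := by
    apply norm_le_gronwallBound_of_norm_deriv_right_le
      (f' := fun s => -(g (t₂ - s) * φ (t₂ - s)))
    · apply hφc.comp ((continuous_const.sub continuous_id).continuousOn)
      intro s hs
      exact hsub2 ⟨by simp; linarith [hs.2], by simp; linarith [hs.1, ht₂.2.trans ht₁.2]⟩
    · intro s hs
      have hq : t₂ - s ∈ Ioc (0:ℝ) T := ⟨by linarith [hs.2], by linarith [hs.1, ht₂.2.trans ht₁.2]⟩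
      have h1 := hd _ hq
      have h2 : HasDerivAt (fun x : ℝ => t₂ - x) (-1) s := by
        simpa using (hasDerivAt_id s).const_sub t₂
      have h3 := h1.comp s h2
      have h4 : g (t₂ - s) * φ (t₂ - s) * (-1) = -(g (t₂ - s) * φ (t₂ - s)) := by ring
      rw [h4] at h3
      exact h3.hasDerivWithinAt
    · simp [hφt₂]
    · intro s hs
      have hmem : t₂ - s ∈ Icc (0:ℝ) T :=
        ⟨by linarith [hs.2], by linarith [hs.1, ht₂.2.trans ht₁.2]⟩
      rw [norm_neg, norm_mul]
      have := mul_le_mul_of_nonneg_right (hK _ hmem) (norm_nonneg (φ (t₂ - s)))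
      linarith
  have h5 := key t₂ ⟨ht₂pos.le, le_rfl⟩
  rw [gronwallBound_ε0_δ0] at h5
  have : φ (t₂ - t₂) = 0 := norm_le_zero_iff.mp h5
  rw [sub_self] at this
  exact absurd (this ▸ h0) (lt_irrefl 0)



/-- refined invariant-region estimate y ≤ M_b(1−φ) for the coupled
system φ' = −μ_b φ y − μ_s φ c, y' = κ_b·(φ/(1+φ))·(1−φ) − (μ_b φ + β_b) y,
with c continuous nonnegative, M_b ≥ κ_b/β_b, 0 < φ(0) ≤ 1 and
0 ≤ y(0) ≤ M_b(1−φ(0)). Then 0 < φ(t) ≤ 1 and 0 ≤ y(t) ≤ M_b(1−φ(t)) for all t ≥ 0. -/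
theorem refined_invariant_region
    (μb μs κb βb Mb : ℝ)
    (hμb : 0 ≤ μb) (hμs : 0 ≤ μs) (hκb : 0 < κb) (hβb : 0 < βb)
    (hMb : κb / βb ≤ Mb)
    (c φ y : ℝ → ℝ)
    (hc_cont : ContinuousOn c (Set.Ici 0))
    (hc_nonneg : ∀ t ∈ Set.Ici (0 : ℝ), 0 ≤ c t)
    (hφ : ∀ t ∈ Set.Ici (0 : ℝ),
      HasDerivWithinAt φ (-(μb * φ t * y t) - μs * φ t * c t) (Set.Ici 0) t)
    (hy : ∀ t ∈ Set.Ici (0 : ℝ),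
      HasDerivWithinAt y
        (κb * (φ t / (1 + φ t)) * (1 - φ t) - (μb * φ t + βb) * y t) (Set.Ici 0) t)
    (hφ0_pos : 0 < φ 0) (hφ0_le : φ 0 ≤ 1)
    (hy0_nonneg : 0 ≤ y 0) (hy0_le : y 0 ≤ Mb * (1 - φ 0)) :
    ∀ t ∈ Set.Ici (0 : ℝ),
      0 < φ t ∧ φ t ≤ 1 ∧ 0 ≤ y t ∧ y t ≤ Mb * (1 - φ t) := by
  intro T hT
  rw [Set.mem_Ici] at hT
  have hTmem : T ∈ Icc (0:ℝ) T := ⟨hT, le_rfl⟩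
  -- continuity of the unknowns
  have hφc0 : ContinuousOn φ (Ici (0:ℝ)) := fun t ht => (hφ t ht).continuousWithinAt
  have hyc0 : ContinuousOn y (Ici (0:ℝ)) := fun t ht => (hy t ht).continuousWithinAt
  have hφc : ContinuousOn φ (Icc 0 T) := hφc0.mono Icc_subset_Ici_self
  have hyc : ContinuousOn y (Icc 0 T) := hyc0.mono Icc_subset_Ici_self
  have hcc : ContinuousOn c (Icc 0 T) := hc_cont.mono Icc_subset_Ici_self
  -- interior derivatives
  have hφd : ∀ t : ℝ, 0 < t →
      HasDerivAt φ (-(μb * φ t * y t) - μs * φ t * c t) t := fun t ht =>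
    (hφ t (le_of_lt ht)).hasDerivAt (Ici_mem_nhds ht)
  have hyd : ∀ t : ℝ, 0 < t →
      HasDerivAt y (κb * (φ t / (1 + φ t)) * (1 - φ t) - (μb * φ t + βb) * y t) t := fun t ht =>
    (hy t (le_of_lt ht)).hasDerivAt (Ici_mem_nhds ht)
  -- Step 1: positivity of φ on [0, T]
  have hpos : ∀ t ∈ Icc (0:ℝ) T, 0 < φ t := by
    apply aux_pos T φ (fun t => -(μb * y t + μs * c t)) hφc
      ((continuousOn_const.mul hyc).add (continuousOn_const.mul hcc)).neg _ hφ0_pos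
    intro t ht
    have h1 := hφd t ht.1
    have h2 : -(μb * y t + μs * c t) * φ t = -(μb * φ t * y t) - μs * φ t * c t := by ring
    rw [h2]
    exact h1
  have h1φ : ∀ t ∈ Icc (0:ℝ) T, 0 < 1 + φ t := fun t ht => by linarith [hpos t ht]
  have hfnn : ∀ t ∈ Icc (0:ℝ) T, 0 ≤ φ t / (1 + φ t) :=
    fun t ht => div_nonneg (hpos t ht).le (h1φ t ht).le
  have hfle : ∀ t ∈ Icc (0:ℝ) T, φ t / (1 + φ t) ≤ 1 :=
    fun t ht => (div_le_one (h1φ t ht)).mpr (by linarith [hpos t ht])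
  -- continuity of the right-hand sides
  have hDc : ContinuousOn (fun t => -(μb * φ t * y t) - μs * φ t * c t) (Icc 0 T) :=
    (((continuousOn_const.mul hφc).mul hyc).neg).sub ((continuousOn_const.mul hφc).mul hcc)
  have hEc : ContinuousOn
      (fun t => κb * (φ t / (1 + φ t)) * (1 - φ t) - (μb * φ t + βb) * y t) (Icc 0 T) := by
    apply ContinuousOn.sub
    · exact (continuousOn_const.mul
        (hφc.div (continuousOn_const.add hφc) (fun t ht => (h1φ t ht).ne'))).mul
        (continuousOn_const.sub hφc)
    · exact ((continuousOn_const.mul hφc).add continuousOn_const).mul hyc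
  -- bound on φ
  obtain ⟨Kφ, hKφ⟩ := isCompact_Icc.exists_bound_of_continuousOn hφc
  have hKφ0 : 0 ≤ Kφ := le_trans (norm_nonneg _) (hKφ 0 ⟨le_rfl, hT⟩)
  have hφle : ∀ t ∈ Icc (0:ℝ) T, φ t ≤ Kφ := fun t ht => by
    have := hKφ t ht; rw [Real.norm_eq_abs] at this; exact (le_abs_self _).trans this
  set K1 : ℝ := μb * Kφ with hK1
  have hK10 : 0 ≤ K1 := mul_nonneg hμb hKφ0
  -- the violation functions
  set A : ℝ → ℝ := fun t => max (φ t - 1) 0 with hA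
  set B : ℝ → ℝ := fun t => max (-(y t)) 0 with hB
  have hAc : ContinuousOn A (Icc 0 T) :=
    continuous_max.comp_continuousOn (f := fun t => (φ t - 1, (0:ℝ))) ((hφc.sub continuousOn_const).prodMk continuousOn_const)
  have hBc : ContinuousOn B (Icc 0 T) :=
    continuous_max.comp_continuousOn (f := fun t => (-(y t), (0:ℝ))) (hyc.neg.prodMk continuousOn_const)
  have hAnn : ∀ t, 0 ≤ A t := fun t => le_max_right _ _
  have hBnn : ∀ t, 0 ≤ B t := fun t => le_max_right _ _
  -- integrability helper
  have hInt : ∀ f : ℝ → ℝ, ContinuousOn f (Icc 0 T) → ∀ p q : ℝ, 0 ≤ p → p ≤ q → q ≤ T →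
      IntervalIntegrable f volume p q := by
    intro f hf p q h0 hpq hqT
    apply ContinuousOn.intervalIntegrable
    rw [uIcc_of_le hpq]
    exact hf.mono (Icc_subset_Icc h0 hqT)
  -- A is controlled by the integral of B
  have hAint : ∀ t ∈ Icc (0:ℝ) T, A t ≤ ∫ s in (0:ℝ)..t, K1 * B s := by
    intro t ht
    have hKBc : ContinuousOn (fun s => K1 * B s) (Icc 0 T) := continuousOn_const.mul hBc
    have hKBnn : ∀ s ∈ Icc (0:ℝ) T, 0 ≤ K1 * B s := fun s _ => mul_nonneg hK10 (hBnn s)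
    by_cases h1 : φ t ≤ 1
    · have hA0 : A t = 0 := max_eq_right (by linarith)
      rw [hA0]
      exact intervalIntegral.integral_nonneg ht.1 (fun s hs => hKBnn s ⟨hs.1, hs.2.trans ht.2⟩)
    · push_neg at h1
      set S : Set ℝ := Icc 0 t ∩ φ ⁻¹' (Iic 1) with hS
      have hScl : IsClosed S :=
        (hφc.mono (Icc_subset_Icc le_rfl ht.2)).preimage_isClosed_of_isClosed
          isClosed_Icc isClosed_Iic
      have hScomp : IsCompact S := isCompact_Icc.of_isClosed_subset hScl inter_subset_left
      have hS0 : (0:ℝ) ∈ S := ⟨⟨le_rfl, ht.1⟩, hφ0_le⟩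
      set t₀ : ℝ := sSup S with ht₀
      have ht₀S : t₀ ∈ S := hScomp.sSup_mem ⟨0, hS0⟩
      have ht₀Icc : t₀ ∈ Icc (0:ℝ) t := ht₀S.1
      have hφt₀ : φ t₀ ≤ 1 := ht₀S.2
      have ht₀T : t₀ ≤ T := ht₀Icc.2.trans ht.2
      have hftc : φ t - φ t₀ ≤ ∫ s in t₀..t, K1 * B s := by
        apply sub_le_integral_of_hasDeriv_right_of_le ht₀Icc.2
          (hφc.mono (Icc_subset_Icc ht₀Icc.1 ht.2))
          (fun x hx => (hφd x (lt_of_le_of_lt ht₀Icc.1 hx.1)).hasDerivWithinAt)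
          ((hKBc.mono (Icc_subset_Icc ht₀Icc.1 ht.2)).integrableOn_Icc)
        intro x hx
        have hxm : x ∈ Icc (0:ℝ) T := ⟨ht₀Icc.1.trans hx.1.le, hx.2.le.trans ht.2⟩
        have hx0 : 0 < φ x := hpos x hxm
        have hcx : 0 ≤ c x := hc_nonneg x hxm.1
        have hyB : -(y x) ≤ B x := le_max_left _ _
        have e1 : -(μb * φ x * y x) = μb * φ x * (-(y x)) := by ring
        have h2 : μb * φ x * (-(y x)) ≤ μb * φ x * B x :=
          mul_le_mul_of_nonneg_left hyB (mul_nonneg hμb hx0.le)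
        have h3 : μb * φ x * B x ≤ μb * Kφ * B x :=
          mul_le_mul_of_nonneg_right (mul_le_mul_of_nonneg_left (hφle x hxm) hμb) (hBnn x)
        have h4 : 0 ≤ μs * φ x * c x := mul_nonneg (mul_nonneg hμs hx0.le) hcx
        rw [hK1]
        linarith
      have hI1 := hInt (fun s => K1 * B s) hKBc 0 t₀ le_rfl ht₀Icc.1 ht₀T
      have hI2 := hInt (fun s => K1 * B s) hKBc t₀ t ht₀Icc.1 ht₀Icc.2 ht.2
      have hsplit := intervalIntegral.integral_add_adjacent_intervals hI1 hI2
      have hnn0 : 0 ≤ ∫ s in (0:ℝ)..t₀, K1 * B s :=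
        intervalIntegral.integral_nonneg ht₀Icc.1 (fun s hs => hKBnn s ⟨hs.1, hs.2.trans ht₀T⟩)
      have hAt : A t = φ t - 1 := max_eq_left (by linarith)
      rw [hAt]
      linarith
  -- B is controlled by the integral of A
  have hBint : ∀ t ∈ Icc (0:ℝ) T, B t ≤ ∫ s in (0:ℝ)..t, κb * A s := by
    intro t ht
    have hKAc : ContinuousOn (fun s => κb * A s) (Icc 0 T) := continuousOn_const.mul hAc
    have hKAnn : ∀ s ∈ Icc (0:ℝ) T, 0 ≤ κb * A s := fun s _ => mul_nonneg hκb.le (hAnn s)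
    by_cases h1 : 0 ≤ y t
    · have hB0 : B t = 0 := max_eq_right (by linarith)
      rw [hB0]
      exact intervalIntegral.integral_nonneg ht.1 (fun s hs => hKAnn s ⟨hs.1, hs.2.trans ht.2⟩)
    · push_neg at h1
      set S : Set ℝ := Icc 0 t ∩ y ⁻¹' (Ici 0) with hS
      have hScl : IsClosed S :=
        (hyc.mono (Icc_subset_Icc le_rfl ht.2)).preimage_isClosed_of_isClosed
          isClosed_Icc isClosed_Ici
      have hScomp : IsCompact S := isCompact_Icc.of_isClosed_subset hScl inter_subset_left
      have hS0 : (0:ℝ) ∈ S := ⟨⟨le_rfl, ht.1⟩, hy0_nonneg⟩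
      set t₀ : ℝ := sSup S with ht₀
      have ht₀S : t₀ ∈ S := hScomp.sSup_mem ⟨0, hS0⟩
      have ht₀Icc : t₀ ∈ Icc (0:ℝ) t := ht₀S.1
      have hyt₀ : 0 ≤ y t₀ := ht₀S.2
      have ht₀T : t₀ ≤ T := ht₀Icc.2.trans ht.2
      have hneg : ∀ s ∈ Ioc t₀ t, y s < 0 := by
        intro s hs
        by_contra hle
        push_neg at hle
        have hsS : s ∈ S := ⟨⟨ht₀Icc.1.trans hs.1.le, hs.2⟩, hle⟩
        exact absurd (le_csSup hScomp.bddAbove hsS) (not_le.mpr hs.1)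
      have hftc : (-(y t)) - (-(y t₀)) ≤ ∫ s in t₀..t, κb * A s := by
        apply sub_le_integral_of_hasDeriv_right_of_le ht₀Icc.2
          ((hyc.mono (Icc_subset_Icc ht₀Icc.1 ht.2)).neg)
          (fun x hx => ((hyd x (lt_of_le_of_lt ht₀Icc.1 hx.1)).neg).hasDerivWithinAt)
          ((hKAc.mono (Icc_subset_Icc ht₀Icc.1 ht.2)).integrableOn_Icc)
        intro x hx
        have hxm : x ∈ Icc (0:ℝ) T := ⟨ht₀Icc.1.trans hx.1.le, hx.2.le.trans ht.2⟩
        have hx0 : 0 < φ x := hpos x hxm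
        have hyx : y x < 0 := hneg x ⟨hx.1, hx.2.le⟩
        have hq0 : 0 ≤ φ x / (1 + φ x) := hfnn x hxm
        have hq1 : φ x / (1 + φ x) ≤ 1 := hfle x hxm
        have hAx : φ x - 1 ≤ A x := le_max_left _ _
        have hAx0 : 0 ≤ A x := hAnn x
        have h2 : (μb * φ x + βb) * y x ≤ 0 :=
          mul_nonpos_of_nonneg_of_nonpos (by positivity) hyx.le
        have h3 : κb * (φ x / (1 + φ x)) * (φ x - 1) ≤ κb * A x := by
          rcases le_or_gt 1 (φ x) with hc1 | hc1
          · have e1 : κb * (φ x / (1 + φ x)) * (φ x - 1) ≤ κb * 1 * (φ x - 1) := by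
              apply mul_le_mul_of_nonneg_right _ (by linarith)
              exact mul_le_mul_of_nonneg_left hq1 hκb.le
            have e2 : κb * (φ x - 1) ≤ κb * A x := mul_le_mul_of_nonneg_left hAx hκb.le
            linarith
          · have e1 : κb * (φ x / (1 + φ x)) * (φ x - 1) ≤ 0 := by
              apply mul_nonpos_of_nonneg_of_nonpos (mul_nonneg hκb.le hq0) (by linarith)
            have e2 : 0 ≤ κb * A x := mul_nonneg hκb.le hAx0
            linarith
        have e3 : -(κb * (φ x / (1 + φ x)) * (1 - φ x) - (μb * φ x + βb) * y x)
            = κb * (φ x / (1 + φ x)) * (φ x - 1) + (μb * φ x + βb) * y x := by ring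
        rw [e3]
        linarith
      have hI1 := hInt (fun s => κb * A s) hKAc 0 t₀ le_rfl ht₀Icc.1 ht₀T
      have hI2 := hInt (fun s => κb * A s) hKAc t₀ t ht₀Icc.1 ht₀Icc.2 ht.2
      have hsplit := intervalIntegral.integral_add_adjacent_intervals hI1 hI2
      have hnn0 : 0 ≤ ∫ s in (0:ℝ)..t₀, κb * A s :=
        intervalIntegral.integral_nonneg ht₀Icc.1 (fun s hs => hKAnn s ⟨hs.1, hs.2.trans ht₀T⟩)
      have hBt : B t = -(y t) := max_eq_left (by linarith)
      rw [hBt]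
      linarith
  -- Gronwall: A + B ≡ 0
  set C : ℝ := K1 + κb with hC
  have hC0 : 0 ≤ C := by positivity
  have huz : ∀ t ∈ Icc (0:ℝ) T, A t + B t = 0 := by
    apply aux_zero_of_le_integral T C hT hC0 _ (hAc.add hBc)
      (fun t _ => add_nonneg (hAnn t) (hBnn t))
    intro t ht
    have hI1 := hInt (fun s => K1 * B s) (continuousOn_const.mul hBc) 0 t le_rfl ht.1 ht.2
    have hI2 := hInt (fun s => κb * A s) (continuousOn_const.mul hAc) 0 t le_rfl ht.1 ht.2
    have hI3 := hInt (fun s => C * (A s + B s)) (continuousOn_const.mul (hAc.add hBc)) 0 t le_rfl ht.1 ht.2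
    have hadd := intervalIntegral.integral_add hI1 hI2
    have hmono : (∫ s in (0:ℝ)..t, (K1 * B s + κb * A s)) ≤ ∫ s in (0:ℝ)..t, C * (A s + B s) := by
      apply intervalIntegral.integral_mono_on ht.1 (hI1.add hI2) hI3
      intro s _
      have e : C * (A s + B s) = K1 * B s + κb * A s + (κb * B s + K1 * A s) := by rw [hC]; ring
      have p1 : 0 ≤ κb * B s := mul_nonneg hκb.le (hBnn s)
      have p2 : 0 ≤ K1 * A s := mul_nonneg hK10 (hAnn s)
      linarith
    have hCmul : (∫ s in (0:ℝ)..t, C * (A s + B s)) = C * ∫ s in (0:ℝ)..t, (A s + B s) :=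
      intervalIntegral.integral_const_mul C _
    have i1 := hAint t ht
    have i2 := hBint t ht
    calc A t + B t ≤ (∫ s in (0:ℝ)..t, K1 * B s) + ∫ s in (0:ℝ)..t, κb * A s := by linarith
    _ = ∫ s in (0:ℝ)..t, (K1 * B s + κb * A s) := hadd.symm
    _ ≤ ∫ s in (0:ℝ)..t, C * (A s + B s) := hmono
    _ = C * ∫ s in (0:ℝ)..t, (A s + B s) := hCmul
  have hφ1 : ∀ t ∈ Icc (0:ℝ) T, φ t ≤ 1 := by
    intro t ht
    have h1 := huz t ht
    have h2 : A t = 0 := le_antisymm (by linarith [hAnn t, hBnn t]) (hAnn t)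
    have h3 : φ t - 1 ≤ A t := le_max_left _ _
    linarith
  have hynn : ∀ t ∈ Icc (0:ℝ) T, 0 ≤ y t := by
    intro t ht
    have h1 := huz t ht
    have h2 : B t = 0 := le_antisymm (by linarith [hAnn t, hBnn t]) (hBnn t)
    have h3 : -(y t) ≤ B t := le_max_left _ _
    linarith
  -- Step 3: y ≤ Mb (1 - φ)
  have hMb0 : 0 ≤ Mb := le_trans (div_pos hκb hβb).le hMb
  have hκM : κb ≤ Mb * βb := (div_le_iff₀ hβb).mp hMb
  set w : ℝ → ℝ := fun t => Real.exp (βb * t) * (y t + Mb * φ t - Mb) with hw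
  have hwc : ContinuousOn w (Icc 0 T) :=
    ((Real.continuous_exp.comp (continuous_const.mul continuous_id)).continuousOn).mul
      ((hyc.add (continuousOn_const.mul hφc)).sub continuousOn_const)
  have hwd : ∀ x ∈ Ioo (0:ℝ) T, HasDerivAt w
      (Real.exp (βb * x) * (βb * (y x + Mb * φ x - Mb)
        + ((κb * (φ x / (1 + φ x)) * (1 - φ x) - (μb * φ x + βb) * y x)
          + Mb * (-(μb * φ x * y x) - μs * φ x * c x)))) x := by
    intro x hx
    have h1 : HasDerivAt (fun t : ℝ => Real.exp (βb * t)) (Real.exp (βb * x) * βb) x := by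
      simpa using ((hasDerivAt_id x).const_mul βb).exp
    have h2 : HasDerivAt (fun t => y t + Mb * φ t - Mb)
        ((κb * (φ x / (1 + φ x)) * (1 - φ x) - (μb * φ x + βb) * y x)
          + Mb * (-(μb * φ x * y x) - μs * φ x * c x)) x :=
      ((hyd x hx.1).add ((hφd x hx.1).const_mul Mb)).sub_const Mb
    have h3 := h1.mul h2
    have e : Real.exp (βb * x) * βb * (y x + Mb * φ x - Mb)
        + Real.exp (βb * x) * ((κb * (φ x / (1 + φ x)) * (1 - φ x) - (μb * φ x + βb) * y x)
          + Mb * (-(μb * φ x * y x) - μs * φ x * c x))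
        = Real.exp (βb * x) * (βb * (y x + Mb * φ x - Mb)
        + ((κb * (φ x / (1 + φ x)) * (1 - φ x) - (μb * φ x + βb) * y x)
          + Mb * (-(μb * φ x * y x) - μs * φ x * c x))) := by ring
    rw [e] at h3
    exact h3
  have hanti : AntitoneOn w (Icc 0 T) := by
    apply antitoneOn_of_deriv_nonpos (convex_Icc 0 T) hwc
    · intro x hx
      rw [interior_Icc] at hx
      exact (hwd x hx).differentiableAt.differentiableWithinAt
    · intro x hx
      rw [interior_Icc] at hx
      rw [(hwd x hx).deriv]
      have hxm : x ∈ Icc (0:ℝ) T := ⟨hx.1.le, hx.2.le⟩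
      have hφx : 0 < φ x := hpos x hxm
      have hφ1x : φ x ≤ 1 := hφ1 x hxm
      have hyx : 0 ≤ y x := hynn x hxm
      have hcx : 0 ≤ c x := hc_nonneg x hxm.1
      have hq0 : 0 ≤ φ x / (1 + φ x) := hfnn x hxm
      have hq1 : φ x / (1 + φ x) ≤ 1 := hfle x hxm
      have key : βb * (y x + Mb * φ x - Mb)
          + ((κb * (φ x / (1 + φ x)) * (1 - φ x) - (μb * φ x + βb) * y x)
            + Mb * (-(μb * φ x * y x) - μs * φ x * c x)) ≤ 0 := by
        have e : βb * (y x + Mb * φ x - Mb)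
            + ((κb * (φ x / (1 + φ x)) * (1 - φ x) - (μb * φ x + βb) * y x)
              + Mb * (-(μb * φ x * y x) - μs * φ x * c x))
            = (κb * (φ x / (1 + φ x)) - Mb * βb) * (1 - φ x)
              - μb * φ x * y x - Mb * (μb * φ x * y x) - Mb * (μs * φ x * c x) := by ring
        rw [e]
        have h1 : κb * (φ x / (1 + φ x)) ≤ κb * 1 := mul_le_mul_of_nonneg_left hq1 hκb.le
        have h2 : (κb * (φ x / (1 + φ x)) - Mb * βb) * (1 - φ x) ≤ 0 :=
          mul_nonpos_of_nonpos_of_nonneg (by linarith) (by linarith)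
        have h3 : 0 ≤ μb * φ x * y x := mul_nonneg (mul_nonneg hμb hφx.le) hyx
        have h4 : 0 ≤ Mb * (μb * φ x * y x) := mul_nonneg hMb0 h3
        have h5 : 0 ≤ Mb * (μs * φ x * c x) :=
          mul_nonneg hMb0 (mul_nonneg (mul_nonneg hμs hφx.le) hcx)
        linarith
      exact mul_nonpos_iff.mpr (Or.inl ⟨(Real.exp_pos _).le, key⟩)
  have hw0 : w 0 ≤ 0 := by
    have : w 0 = Real.exp (βb * 0) * (y 0 + Mb * φ 0 - Mb) := rfl
    rw [this, mul_zero, Real.exp_zero, one_mul]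
    linarith
  have hwT : w T ≤ 0 := le_trans (hanti ⟨le_rfl, hT⟩ hTmem hT) hw0
  have hzT : y T + Mb * φ T - Mb ≤ 0 := by
    by_contra hcon
    push_neg at hcon
    have := mul_pos (Real.exp_pos (βb * T)) hcon
    rw [hw] at hwT
    simp only at hwT
    linarith
  exact ⟨hpos T hTmem, hφ1 T hTmem, hynn T hTmem, by linarith⟩
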